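/- Let A be a finite-dimensional algebra over an algebraically closed field and let X, M, Z be finite-dimensional left A-modules with M ≠ 0. If there exists a short exact sequence 0 → X → M ⊕ Z → Z → 0 in mod A, then Hom_A(X, M) ≠ 0. -/

import Mathlib

universe u v

open Module

/-- A finite-dimensional left module over the `k`-algebra `A`. -/
structure FDMod (k A : Type u) [Field k] [Ring A] [Algebra k A] : Type (u + 1) where
  carrier : Type u
  [addCommGroup : AddCommGroup carrier]
  [moduleK : Module k carrier]
  [moduleA : Module A carrier]
  [tower : IsScalarTower k A carrier]
  [fd : FiniteDimensional k carrier]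

attribute [instance] FDMod.addCommGroup FDMod.moduleK FDMod.moduleA FDMod.tower FDMod.fd

variable {k A : Type u} [Field k] [Ring A] [Algebra k A]

/-- `M` is a brick: `M ≠ 0` and every `A`-endomorphism of `M` is a `k`-scalar,
i.e. `End_A(M) ≅ k`. -/
def FDMod.IsBrick (M : FDMod k A) : Prop :=
  Nontrivial M.carrier ∧ ∀ f : M.carrier →ₗ[A] M.carrier, ∃ c : k, ∀ x : M.carrier, f x = c • x

/-- `M` and `N` are Hom-orthogonal: `Hom_A(M,N) = 0` and `Hom_A(N,M) = 0`. -/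
def FDMod.HomOrth (M N : FDMod k A) : Prop :=
  (∀ f : M.carrier →ₗ[A] N.carrier, f = 0) ∧ (∀ f : N.carrier →ₗ[A] M.carrier, f = 0)

/-- `M` and `N` are isomorphic as `A`-modules. -/
def FDMod.Iso (M N : FDMod k A) : Prop :=
  Nonempty (M.carrier ≃ₗ[A] N.carrier)

/-- A family of modules forms a Hom-orthogonal set: the modules are nonzero,
pairwise non-isomorphic and pairwise Hom-orthogonal. -/
def HomOrthFamily {I : Type v} (X : I → FDMod k A) : Prop :=
  (∀ i, Nontrivial (X i).carrier) ∧
  (∀ i j, i ≠ j → ¬(X i).Iso (X j)) ∧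
  (∀ i j, i ≠ j → (X i).HomOrth (X j))

/-- `A` is brick-finite: there are only finitely many isomorphism classes of bricks. -/
def BrickFinite (k A : Type u) [Field k] [Ring A] [Algebra k A] : Prop :=
  ∃ (m : ℕ) (f : Fin m → FDMod k A), ∀ N : FDMod k A, N.IsBrick → ∃ i, N.Iso (f i)

/-- `A` has rank `n`: there are exactly `n` isomorphism classes of simple modules. -/
def HasRank (k A : Type u) [Field k] [Ring A] [Algebra k A] (n : ℕ) : Prop :=
  ∃ S : Fin n → FDMod k A,
    (∀ i, IsSimpleModule A (S i).carrier) ∧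
    (∀ i j, i ≠ j → ¬(S i).Iso (S j)) ∧
    (∀ T : FDMod k A, IsSimpleModule A T.carrier → ∃ i, T.Iso (S i))

open LinearMap in
theorem stmt11_aux {k A : Type u} [Field k] [Ring A] [Algebra k A] :
    ∀ (n : ℕ) (X M Z : Type u) [AddCommGroup X] [AddCommGroup M] [AddCommGroup Z]
      [Module A X] [Module A M] [Module A Z] [Module k Z] [IsScalarTower k A Z]
      [FiniteDimensional k Z],
      finrank k Z = n → Nontrivial M →
      ∀ (ι : X →ₗ[A] M × Z) (π : M × Z →ₗ[A] Z),
        Function.Injective ι → Function.Surjective π →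
        LinearMap.range ι = LinearMap.ker π →
        (∀ f : X →ₗ[A] M, f = 0) → False := by
  intro n
  induction n using Nat.strong_induction_on with
  | _ n IH =>
    intro X M Z iX iM iZ jX jM jZ kZ tZ fZ hrank hM ι π hinj hsurj hexact hf
    set p : M × Z →ₗ[A] M := LinearMap.fst A M Z with hp
    set g : X →ₗ[A] Z := (LinearMap.snd A M Z).comp ι with hgdef
    have hι0 : ∀ x, ι x = (0, g x) := by
      intro x
      have h1 : p (ι x) = 0 := by
        have := hf (p.comp ι)
        calc p (ι x) = (p.comp ι) x := rfl
        _ = 0 := by rw [this]; rfl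
      exact Prod.ext h1 rfl
    set u : M →ₗ[A] Z := π.comp (LinearMap.inl A M Z) with hu
    set v : Z →ₗ[A] Z := π.comp (LinearMap.inr A M Z) with hv
    have hπadd : ∀ (m : M) (z : Z), π (m, z) = u m + v z := by
      intro m z
      have : (m, z) = ((m, 0) : M × Z) + (0, z) := by simp
      rw [this, map_add]; rfl
    -- the retraction h'
    have hle : LinearMap.ker π ≤ LinearMap.ker p := by
      intro y hy
      rw [← hexact] at hy
      obtain ⟨x, rfl⟩ := hy
      rw [LinearMap.mem_ker, hι0 x]
      rfl
    set e := π.quotKerEquivOfSurjective hsurj with he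
    set h' : Z →ₗ[A] M := ((LinearMap.ker π).liftQ p hle).comp e.symm.toLinearMap with hh'
    have hfact : ∀ y : M × Z, h' (π y) = p y := by
      intro y
      have h1 : e.symm (π y) = Submodule.Quotient.mk y := by
        apply e.injective
        rw [LinearEquiv.apply_symm_apply]
        rfl
      show ((LinearMap.ker π).liftQ p hle) (e.symm (π y)) = p y
      rw [h1, Submodule.liftQ_apply]
    have hum : ∀ m : M, h' (u m) = m := by
      intro m; exact hfact (m, 0)
    have hvz : ∀ z : Z, h' (v z) = 0 := by
      intro z; exact hfact (0, z)
    have hgx : ∀ x : X, h' (g x) = 0 := by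
      intro x
      have := hf (h'.comp g)
      calc h' (g x) = (h'.comp g) x := rfl
      _ = 0 := by rw [this]; rfl
    have hvg : ∀ x : X, v (g x) = 0 := by
      intro x
      have hmem : ι x ∈ LinearMap.ker π := hexact ▸ LinearMap.mem_range_self ι x
      rw [LinearMap.mem_ker, hι0 x, hπadd, map_zero, zero_add] at hmem
      exact hmem
    have hkerv : ∀ z : Z, v z = 0 → ∃ x, g x = z := by
      intro z hz
      have hmem : ((0 : M), z) ∈ LinearMap.ker π := by
        rw [LinearMap.mem_ker, hπadd, map_zero, zero_add]; exact hz
      rw [← hexact] at hmem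
      obtain ⟨x, hx⟩ := hmem
      rw [hι0 x] at hx
      exact ⟨x, congrArg Prod.snd hx⟩
    -- the submodule C and the new exact sequence
    set C : Submodule A Z := LinearMap.ker h' with hC
    haveI : FiniteDimensional k C :=
      inferInstanceAs (FiniteDimensional k (C.restrictScalars k))
    have hgC : ∀ x : X, g x ∈ C := fun x => hgx x
    set g' : X →ₗ[A] C := g.codRestrict C hgC with hg'
    set w : M × C →ₗ[A] Z :=
      v.comp (u.comp (LinearMap.fst A M C) + C.subtype.comp (LinearMap.snd A M C)) with hw
    have hwC : ∀ y : M × C, w y ∈ C := fun y => hvz _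
    set π' : M × C →ₗ[A] C := w.codRestrict C hwC with hπ'
    set ι' : X →ₗ[A] M × C := LinearMap.prod 0 g' with hι'
    have hginj : Function.Injective g := by
      intro a b hab
      apply hinj
      rw [hι0 a, hι0 b, hab]
    have hinj' : Function.Injective ι' := by
      intro a b hab
      have : g' a = g' b := congrArg Prod.snd hab
      exact hginj (congrArg Subtype.val this)
    have hsurj' : Function.Surjective π' := by
      rintro ⟨c, hc⟩
      obtain ⟨⟨m, z⟩, hmz⟩ := hsurj c
      rw [hπadd] at hmz
      have hm0 : m = 0 := by
        have := congrArg h' hmz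
        rw [map_add, hum, hvz, add_zero] at this
        rw [this]; exact hc
      rw [hm0, map_zero, zero_add] at hmz
      refine ⟨(h' z, ⟨z - u (h' z), ?_⟩), ?_⟩
      · show h' (z - u (h' z)) = 0
        rw [map_sub, hum, sub_self]
      · apply Subtype.ext
        show v (u (h' z) + (z - u (h' z))) = c
        rw [add_sub_cancel]; exact hmz
    have hexact' : LinearMap.range ι' = LinearMap.ker π' := by
      apply le_antisymm
      · rintro _ ⟨x, rfl⟩
        rw [LinearMap.mem_ker]
        apply Subtype.ext
        show v (u ((0 : X →ₗ[A] M) x) + ((g' x : C) : Z)) = 0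
        simp only [LinearMap.zero_apply, map_zero, zero_add]
        exact hvg x
      · rintro ⟨m, c⟩ hmc
        have hvc : v (u m + (c : Z)) = 0 := congrArg Subtype.val hmc
        obtain ⟨x, hx⟩ := hkerv _ hvc
        have hm0 : m = 0 := by
          have := congrArg h' hx
          rw [map_add, hum, hgx] at this
          have h2 : h' (c : Z) = 0 := c.2
          rw [h2, add_zero] at this
          exact this.symm
        refine ⟨x, ?_⟩
        have hcx : g x = (c : Z) := by
          rw [hm0, map_zero, zero_add] at hx; exact hx
        refine Prod.ext ?_ ?_
        · show (0 : M) = m; rw [hm0]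
        · exact Subtype.ext hcx
    -- C is proper
    have hCtop : C ≠ ⊤ := by
      obtain ⟨m, hm⟩ := exists_ne (0 : M)
      intro htop
      have : u m ∈ C := htop ▸ Submodule.mem_top
      have : h' (u m) = 0 := this
      rw [hum] at this
      exact hm this
    have hlt : finrank k C < n := by
      rw [← hrank]
      have : (C.restrictScalars k) < ⊤ := by
        rw [lt_top_iff_ne_top]
        intro h
        exact hCtop ((Submodule.restrictScalars_eq_top_iff k A Z).mp h)
      exact Submodule.finrank_lt this.ne
    exact IH (finrank k C) hlt X M C rfl hM ι' π' hinj' hsurj' hexact' hf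

/-- If `X`, `M`, `Z` are finite-dimensional `A`-modules with
`M ≠ 0` and there is a short exact sequence `0 → X → M ⊕ Z → Z → 0` in `mod A`,
then `Hom_A(X, M) ≠ 0`. -/
theorem stmt11 {k A : Type u} [Field k] [IsAlgClosed k] [Ring A] [Algebra k A]
    [FiniteDimensional k A] (X M Z : FDMod k A) (hM : Nontrivial M.carrier)
    (ι : X.carrier →ₗ[A] M.carrier × Z.carrier)
    (π : M.carrier × Z.carrier →ₗ[A] Z.carrier)
    (hι : Function.Injective ι) (hπ : Function.Surjective π)
    (hexact : LinearMap.range ι = LinearMap.ker π) :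
    ∃ f : X.carrier →ₗ[A] M.carrier, f ≠ 0 := by
  by_contra h
  push_neg at h
  exact stmt11_aux (finrank k Z.carrier) X.carrier M.carrier Z.carrier rfl hM ι π hι hπ
    hexact h
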